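/- Let α ≥ 3 be an integer, R_c the unique positive solution of (R − 1)·g_α(R) = R^α/(α−1)!, and β_c = R_c/g_α(R_c). Then the radius of convergence of the real power series Σ_{n≥2} r_α(n)·x^{n−1} equals exactly β_c; that is, the grand-canonical partition function of rooted branched polymers with coordination numbers at most α converges precisely for |x| < β_c and its critical fugacity is β_c = R_c/g_α(R_c). -/

import Mathlib

open Finset

/-- The truncated exponential `g_α(R) = Σ_{γ=0}^{α−1} R^γ/γ!`. -/
noncomputable def truncExp (α : ℕ) (R : ℝ) : ℝ :=
  ∑ γ ∈ Finset.range α, R ^ γ / (Nat.factorial γ)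

/-- The number `r_α(n)` of combinatorially inequivalent rooted tree graphs with
`n` vertices, root of coordination number 1, and all coordination numbers at
most `α`, given by the paper's closed (Cayley-type) formula. -/
noncomputable def rootedTrees (α n : ℕ) : ℝ :=
  (1 / (n - 1 : ℝ)) *
    ∑ f ∈ (Fintype.piFinset fun _ : Fin (n - 1) => Finset.range α) |>.filter
        (fun f => ∑ i, f i = n - 2),
      ∏ i, (1 : ℝ) / (Nat.factorial (f i))

namespace BP





/-- cross form of log-concavity -/
def PP (u : ℤ → ℝ) : Prop := ∀ x y : ℤ, x ≤ y → u x * u (y + 1) ≤ u (x + 1) * u y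

noncomputable def conv (u w : ℤ → ℝ) (m : ℤ) : ℝ :=
  if 0 ≤ m then ∑ j ∈ Finset.Icc (0 : ℤ) m, u j * w (m - j) else 0

theorem RR_of_PP {u : ℤ → ℝ} (hu : PP u) :
    ∀ (d e : ℕ) (p : ℤ), u p * u (p + d + e) ≤ u (p + d) * u (p + e) := by
  intro d
  induction d with
  | zero => intro e p; simp
  | succ d ih =>
    intro e p
    cases e with
    | zero => simp [mul_comm]
    | succ e =>
      have h1 : u p * u (p + ((d:ℤ)+1) + ((e:ℤ)+1)) ≤ u (p + 1) * u (p + d + ((e:ℤ)+1)) := by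
        have := hu p (p + d + ((e:ℤ)+1)) (by linarith [Int.ofNat_nonneg d, Int.ofNat_nonneg e])
        have harg : p + ((d:ℤ)+1) + ((e:ℤ)+1) = (p + d + ((e:ℤ)+1)) + 1 := by ring
        rw [harg]; exact this
      have h2 : u (p + 1) * u ((p+1) + d + e) ≤ u ((p+1) + d) * u ((p+1) + e) := ih e (p+1)
      have e1 : (p+1) + (d:ℤ) + e = p + d + ((e:ℤ)+1) := by ring
      have e2 : (p+1) + (d:ℤ) = p + ((d:ℤ)+1) := by ring
      have e3 : (p+1) + (e:ℤ) = p + ((e:ℤ)+1) := by ring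
      rw [e1, e2, e3] at h2
      have := le_trans h1 h2
      push_cast
      convert this using 3 <;> push_cast <;> ring

theorem conv_nonneg {u w : ℤ → ℝ} (hu : ∀ z, 0 ≤ u z) (hw : ∀ z, 0 ≤ w z) (m : ℤ) :
    0 ≤ conv u w m := by
  unfold conv
  split
  · exact Finset.sum_nonneg fun j _ => mul_nonneg (hu j) (hw _)
  · exact le_refl 0

theorem conv_eq_sum {u w : ℤ → ℝ} (hu0 : ∀ x : ℤ, x < 0 → u x = 0)
    (hw0 : ∀ x : ℤ, x < 0 → w x = 0) {a b m : ℤ} (ha : a ≤ 0) (hm : 0 ≤ m) (hb : m ≤ b) :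
    conv u w m = ∑ j ∈ Finset.Icc a b, u j * w (m - j) := by
  unfold conv
  rw [if_pos hm]
  apply Finset.sum_subset
  · intro j hj
    rw [Finset.mem_Icc] at hj ⊢
    exact ⟨le_trans ha hj.1, le_trans hj.2 hb⟩
  · intro j hj hnj
    rw [Finset.mem_Icc] at hj hnj
    push_neg at hnj
    rcases lt_or_ge j 0 with h | h
    · rw [hu0 j h, zero_mul]
    · rw [hw0 (m - j) (by linarith [hnj h]), mul_zero]

theorem conv_shift {u w : ℤ → ℝ} (hu0 : ∀ x : ℤ, x < 0 → u x = 0)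
    (hw0 : ∀ x : ℤ, x < 0 → w x = 0) {a b m : ℤ} (ha : a ≤ -1) (hm : 0 ≤ m) (hb : m ≤ b) :
    conv u w (m + 1) = ∑ j ∈ Finset.Icc a b, u (j + 1) * w (m - j) := by
  have h1 : conv u w (m + 1) = ∑ j ∈ Finset.Icc (a + 1) (b + 1), u j * w (m + 1 - j) :=
    conv_eq_sum hu0 hw0 (by linarith) (by linarith) (by linarith)
  rw [h1]
  have h2 : Finset.Icc (a + 1) (b + 1) = Finset.map (addLeftEmbedding 1) (Finset.Icc a b) := by
    rw [Finset.map_add_left_Icc]; ring_nf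
  rw [h2, Finset.sum_map]
  apply Finset.sum_congr rfl
  intro j _
  simp only [addLeftEmbedding_apply]
  congr 1
  · congr 1; ring
  · congr 1; ring

theorem PP_conv {u w : ℤ → ℝ} (hu : PP u) (hw : PP w)
    (hu0 : ∀ x : ℤ, x < 0 → u x = 0) (hw0 : ∀ x : ℤ, x < 0 → w x = 0)
    (hun : ∀ z, 0 ≤ u z) (hwn : ∀ z, 0 ≤ w z) : PP (conv u w) := by
  intro x y hxy
  rcases lt_or_ge x 0 with hx | hx
  · have : conv u w x = 0 := by unfold conv; rw [if_neg (by omega)]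
    rw [this, zero_mul]
    exact mul_nonneg (conv_nonneg hun hwn _) (conv_nonneg hun hwn _)
  · -- main case
    set J := Finset.Icc (-1 : ℤ) (y + 1) with hJ
    have cx : conv u w x = ∑ j ∈ J, u j * w (x - j) :=
      conv_eq_sum hu0 hw0 (by norm_num) hx (by linarith)
    have cy : conv u w y = ∑ j ∈ J, u j * w (y - j) :=
      conv_eq_sum hu0 hw0 (by norm_num) (le_trans hx hxy) (by linarith)
    have cx1 : conv u w (x + 1) = ∑ j ∈ J, u (j + 1) * w (x - j) :=
      conv_shift hu0 hw0 le_rfl hx (by linarith)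
    have cy1 : conv u w (y + 1) = ∑ j ∈ J, u (j + 1) * w (y - j) :=
      conv_shift hu0 hw0 le_rfl (le_trans hx hxy) (by linarith)
    rw [cx, cy, cx1, cy1]
    rw [← sub_nonneg]
    have expand :
        (∑ j ∈ J, u (j + 1) * w (x - j)) * (∑ j ∈ J, u j * w (y - j)) -
        (∑ j ∈ J, u j * w (x - j)) * (∑ j ∈ J, u (j + 1) * w (y - j)) =
        ∑ j ∈ J, ∑ j' ∈ J,
          (w (x - j) * w (y - j')) * (u (j + 1) * u j' - u j * u (j' + 1)) := by
      rw [Finset.sum_mul_sum, Finset.sum_mul_sum, ← Finset.sum_sub_distrib]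
      apply Finset.sum_congr rfl; intro j _
      rw [← Finset.sum_sub_distrib]
      apply Finset.sum_congr rfl; intro j' _
      ring
    rw [expand]
    -- key pointwise claim
    have key : ∀ j ∈ J, ∀ j' ∈ J,
        0 ≤ (w (x - j) * w (y - j')) * (u (j + 1) * u j' - u j * u (j' + 1)) +
            (w (x - j') * w (y - j)) * (u (j' + 1) * u j - u j' * u (j + 1)) := by
      have main : ∀ j j' : ℤ, j ≤ j' →
          0 ≤ (w (x - j) * w (y - j')) * (u (j + 1) * u j' - u j * u (j' + 1)) +
              (w (x - j') * w (y - j)) * (u (j' + 1) * u j - u j' * u (j + 1)) := by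
        intro j j' hjj'
        have hG : 0 ≤ u (j + 1) * u j' - u j * u (j' + 1) := by
          have := hu j j' hjj'
          linarith
        have hA : w (x - j') * w (y - j) ≤ w (x - j) * w (y - j') := by
          have hR := RR_of_PP hw (j' - j).toNat (y - x).toNat (x - j')
          have h1 : ((j' - j).toNat : ℤ) = j' - j := Int.toNat_of_nonneg (by linarith)
          have h2 : ((y - x).toNat : ℤ) = y - x := Int.toNat_of_nonneg (by linarith)
          rw [h1, h2] at hR
          have e1 : x - j' + (j' - j) + (y - x) = y - j := by ring
          have e2 : x - j' + (j' - j) = x - j := by ring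
          have e3 : x - j' + (y - x) = y - j' := by ring
          rw [e1, e2, e3] at hR
          exact hR
        nlinarith [mul_nonneg (hwn (x - j')) (hwn (y - j))]
      intro j _ j' _
      rcases le_total j j' with h | h
      · exact main j j' h
      · have := main j' j h
        linarith
    -- conclude
    have comm : ∑ j ∈ J, ∑ j' ∈ J,
          (w (x - j) * w (y - j')) * (u (j + 1) * u j' - u j * u (j' + 1)) =
        ∑ j' ∈ J, ∑ j ∈ J,
          (w (x - j) * w (y - j')) * (u (j + 1) * u j' - u j * u (j' + 1)) :=
      Finset.sum_comm
    have h2 : 0 ≤ (2:ℝ) * ∑ j ∈ J, ∑ j' ∈ J,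
          (w (x - j) * w (y - j')) * (u (j + 1) * u j' - u j * u (j' + 1)) := by
      rw [two_mul]
      nth_rewrite 2 [comm]
      rw [← Finset.sum_add_distrib]
      apply Finset.sum_nonneg
      intro j hj
      rw [← Finset.sum_add_distrib]
      apply Finset.sum_nonneg
      intro j' hj'
      have := key j hj j' hj'
      nlinarith [this]
    linarith




noncomputable def SS (α N m : ℕ) : ℝ :=
  ∑ f ∈ (Fintype.piFinset fun _ : Fin N => Finset.range α).filter
      (fun f => ∑ i, f i = m),
    ∏ i, (1 : ℝ) / (Nat.factorial (f i))

theorem SS_nonneg (α N m : ℕ) : 0 ≤ SS α N m := by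
  apply Finset.sum_nonneg
  intro f _
  exact Finset.prod_nonneg fun i _ => by positivity

theorem sum_piFinset_succ {N α : ℕ} (φ : (Fin (N + 1) → ℕ) → ℝ) :
    ∑ f ∈ Fintype.piFinset (fun _ : Fin (N + 1) => Finset.range α), φ f =
      ∑ j ∈ Finset.range α, ∑ f ∈ Fintype.piFinset (fun _ : Fin N => Finset.range α),
        φ (Fin.cons j f) := by
  rw [← Finset.sum_product']
  apply Finset.sum_nbij' (fun f => ((f 0 : ℕ), Fin.tail f)) (fun p => Fin.cons p.1 p.2)
  · intro f hf
    rw [Fintype.mem_piFinset] at hf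
    rw [Finset.mem_product]
    exact ⟨hf 0, by rw [Fintype.mem_piFinset]; intro i; exact hf i.succ⟩
  · intro p hp
    rw [Finset.mem_product, Fintype.mem_piFinset] at hp
    rw [Fintype.mem_piFinset]
    intro i
    refine Fin.cases ?_ ?_ i
    · simpa using hp.1
    · intro i'; simpa using hp.2 i'
  · intro f _; exact Fin.cons_self_tail f
  · intro p _; simp [Fin.tail_cons]
  · intro f _; simp [Fin.cons_self_tail]

theorem SS_succ (α N m : ℕ) :
    SS α (N + 1) m =
      ∑ j ∈ Finset.range α,
        if j ≤ m then (1 / (Nat.factorial j) : ℝ) * SS α N (m - j) else 0 := by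
  rw [SS, Finset.sum_filter, sum_piFinset_succ]
  apply Finset.sum_congr rfl
  intro j _
  rcases le_or_gt j m with hj | hj
  · rw [if_pos hj, SS, Finset.sum_filter, Finset.mul_sum]
    apply Finset.sum_congr rfl
    intro f _
    have hcond : (∑ i, Fin.cons j f i) = m ↔ (∑ i, f i) = m - j := by
      rw [Fin.sum_univ_succ]; simp only [Fin.cons_zero, Fin.cons_succ]; omega
    by_cases h : (∑ i, f i) = m - j
    · rw [if_pos (hcond.mpr h), if_pos h, Fin.prod_univ_succ]
      simp only [Fin.cons_zero, Fin.cons_succ]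
    · rw [if_neg (fun hc => h (hcond.mp hc)), if_neg h, mul_zero]
  · rw [if_neg (by omega)]
    apply Finset.sum_eq_zero
    intro f _
    rw [if_neg]
    rw [Fin.sum_univ_succ]
    simp only [Fin.cons_zero, Fin.cons_succ]
    omega

theorem SS_zero (α m : ℕ) : SS α 0 m = if m = 0 then 1 else 0 := by
  rw [SS]
  rcases eq_or_ne m 0 with rfl | hm
  · rw [if_pos rfl]
    rw [Finset.filter_true_of_mem (fun f _ => by simp)]
    rw [Finset.sum_congr rfl (fun f _ => by rw [Finset.univ_eq_empty, Finset.prod_empty])]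
    rw [Finset.sum_const, Fintype.card_piFinset]
    simp
  · rw [if_neg hm]
    rw [Finset.filter_false_of_mem (fun f _ => by simpa using Ne.symm hm)]
    exact Finset.sum_empty

theorem SS_eq_zero {α N m : ℕ} (h : N * (α - 1) < m) : SS α N m = 0 := by
  rw [SS, Finset.filter_false_of_mem, Finset.sum_empty]
  intro f hf
  rw [Fintype.mem_piFinset] at hf
  intro hc
  have hle : (∑ i, f i) ≤ N * (α - 1) := by
    calc (∑ i, f i) ≤ ∑ _i : Fin N, (α - 1) := by
          apply Finset.sum_le_sum
          intro i _
          have := hf i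
          rw [Finset.mem_range] at this
          omega
      _ = N * (α - 1) := by rw [Finset.sum_const, Finset.card_univ, Fintype.card_fin]; ring
  omega

theorem SS_succ_ge {α : ℕ} (hα : 0 < α) (N m : ℕ) : SS α N m ≤ SS α (N + 1) m := by
  rw [SS_succ]
  have hmem : (0 : ℕ) ∈ Finset.range α := Finset.mem_range.mpr hα
  have h := Finset.single_le_sum (f := fun j =>
    if j ≤ m then (1 / (Nat.factorial j) : ℝ) * SS α N (m - j) else 0)
    (fun j _ => by
      split
      · exact mul_nonneg (by positivity) (SS_nonneg α N _)
      · exact le_refl 0) hmem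
  simpa using h


noncomputable def vv (α : ℕ) (Rc : ℝ) : ℤ → ℝ :=
  fun j => if 0 ≤ j ∧ j < (α : ℤ) then Rc ^ j.toNat / (Nat.factorial j.toNat) else 0

noncomputable def Wz (α : ℕ) (Rc : ℝ) : ℕ → ℤ → ℝ
  | 0 => fun m => if m = 0 then 1 else 0
  | (N + 1) => BP.conv (vv α Rc) (Wz α Rc N)

theorem vv_nonneg {α : ℕ} {Rc : ℝ} (hRc : 0 ≤ Rc) (j : ℤ) : 0 ≤ vv α Rc j := by
  unfold vv; split
  · positivity
  · exact le_refl 0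

theorem vv_neg {α : ℕ} {Rc : ℝ} (j : ℤ) (hj : j < 0) : vv α Rc j = 0 := by
  unfold vv; rw [if_neg (by omega)]

theorem Wz_nonneg {α : ℕ} {Rc : ℝ} (hRc : 0 ≤ Rc) (N : ℕ) (m : ℤ) : 0 ≤ Wz α Rc N m := by
  induction N generalizing m with
  | zero => unfold Wz; split <;> norm_num
  | succ N ih => exact conv_nonneg (vv_nonneg hRc) ih m

theorem Wz_neg {α : ℕ} {Rc : ℝ} (N : ℕ) (m : ℤ) (hm : m < 0) : Wz α Rc N m = 0 := by
  cases N with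
  | zero => unfold Wz; rw [if_neg (by omega)]
  | succ N => show conv _ _ m = 0; unfold conv; rw [if_neg (by omega)]

theorem PP_vv {α : ℕ} {Rc : ℝ} (hRc : 0 ≤ Rc) : PP (vv α Rc) := by
  intro x y hxy
  rcases lt_or_ge x 0 with hx | hx
  · rw [vv_neg x hx, zero_mul]
    exact mul_nonneg (vv_nonneg hRc _) (vv_nonneg hRc _)
  rcases le_or_gt (α : ℤ) (y + 1) with hy | hy
  · have h0 : vv α Rc (y + 1) = 0 := by unfold vv; rw [if_neg (by omega)]
    rw [h0, mul_zero]
    exact mul_nonneg (vv_nonneg hRc _) (vv_nonneg hRc _)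
  · -- 0 ≤ x ≤ y, y + 1 < α
    set a := x.toNat with ha
    set b := y.toNat with hb
    have hax : (a : ℤ) = x := Int.toNat_of_nonneg hx
    have hby : (b : ℤ) = y := Int.toNat_of_nonneg (le_trans hx hxy)
    have hab : a ≤ b := by omega
    have e1 : vv α Rc x = Rc ^ a / (Nat.factorial a) := by
      unfold vv; rw [if_pos ⟨hx, by omega⟩]
    have e2 : vv α Rc (x + 1) = Rc ^ (a + 1) / (Nat.factorial (a + 1)) := by
      unfold vv; rw [if_pos ⟨by omega, by omega⟩]
      have hx1 : (x + 1).toNat = a + 1 := by omega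
      rw [hx1]
    have e3 : vv α Rc y = Rc ^ b / (Nat.factorial b) := by
      unfold vv; rw [if_pos ⟨by omega, by omega⟩]
    have e4 : vv α Rc (y + 1) = Rc ^ (b + 1) / (Nat.factorial (b + 1)) := by
      unfold vv; rw [if_pos ⟨by omega, by omega⟩]
      have hy1 : (y + 1).toNat = b + 1 := by omega
      rw [hy1]
    rw [e1, e2, e3, e4, div_mul_div_comm, div_mul_div_comm, ← pow_add, ← pow_add]
    have hpe : a + (b + 1) = a + 1 + b := by ring
    rw [hpe]
    apply div_le_div_of_nonneg_left ?_ ?_ ?_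
    · positivity
    · positivity
    · have hfa : (0:ℝ) ≤ (Nat.factorial a : ℝ) := by positivity
      have hfb : (0:ℝ) ≤ (Nat.factorial b : ℝ) := by positivity
      have hab' : ((a:ℝ)) ≤ (b:ℝ) := by exact_mod_cast hab
      rw [Nat.factorial_succ, Nat.factorial_succ]
      push_cast
      nlinarith [mul_nonneg hfa hfb]

theorem PP_Wz {α : ℕ} {Rc : ℝ} (hRc : 0 ≤ Rc) (N : ℕ) : PP (Wz α Rc N) := by
  induction N with
  | zero =>
    intro x y hxy
    have h1 : Wz α Rc 0 x * Wz α Rc 0 (y + 1) = 0 := by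
      show (if x = 0 then (1:ℝ) else 0) * (if y + 1 = 0 then (1:ℝ) else 0) = 0
      rcases eq_or_ne x 0 with rfl | hx
      · have hy1 : y + 1 ≠ 0 := by omega
        simp [hy1]
      · simp [hx]
    rw [h1]
    exact mul_nonneg (Wz_nonneg hRc 0 _) (Wz_nonneg hRc 0 _)
  | succ N ih =>
    exact PP_conv (PP_vv hRc) ih (fun x hx => vv_neg x hx) (fun x hx => Wz_neg N x hx)
      (vv_nonneg hRc) (Wz_nonneg hRc N)

theorem Wz_eq {α : ℕ} {Rc : ℝ} (N : ℕ) (m : ℤ) :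
    Wz α Rc N m = if 0 ≤ m then SS α N m.toNat * Rc ^ m.toNat else 0 := by
  induction N generalizing m with
  | zero =>
    show (if m = 0 then (1:ℝ) else 0) = _
    rcases lt_or_ge m 0 with hm | hm
    · rw [if_neg (by omega), if_neg (by omega)]
    · rw [if_pos hm, SS_zero]
      rcases eq_or_ne m 0 with rfl | hm0
      · norm_num
      · rw [if_neg hm0, if_neg (by omega)]
        norm_num
  | succ N ih =>
    rcases lt_or_ge m 0 with hm | hm
    · rw [Wz_neg _ _ hm, if_neg (by omega)]
    · rw [if_pos hm]
      set mn := m.toNat with hmn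
      have hm' : (mn : ℤ) = m := Int.toNat_of_nonneg hm
      show conv (vv α Rc) (Wz α Rc N) m = _
      unfold conv
      rw [if_pos hm]
      have hbij : ∑ j ∈ Finset.Icc (0 : ℤ) m, vv α Rc j * Wz α Rc N (m - j) =
          ∑ k ∈ Finset.range (mn + 1),
            (if k < α then Rc ^ k / (Nat.factorial k) else 0) *
              (SS α N (mn - k) * Rc ^ (mn - k)) := by
        refine Finset.sum_nbij' (fun j => j.toNat) (fun k => (k : ℤ)) ?_ ?_ ?_ ?_ ?_
        · intro j hj
          rw [Finset.mem_Icc] at hj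
          rw [Finset.mem_range]
          omega
        · intro k hk
          rw [Finset.mem_range] at hk
          rw [Finset.mem_Icc]
          omega
        · intro j hj
          rw [Finset.mem_Icc] at hj
          omega
        · intro k _
          omega
        · intro j hj
          rw [Finset.mem_Icc] at hj
          have hj0 : (j.toNat : ℤ) = j := Int.toNat_of_nonneg hj.1
          congr 1
          · unfold vv
            rcases lt_or_ge j (α : ℤ) with h | h
            · rw [if_pos ⟨hj.1, h⟩, if_pos (by omega)]
            · rw [if_neg (by omega), if_neg (by omega)]
          · rw [ih (m - j), if_pos (by omega)]
            have h1 : (m - j).toNat = mn - j.toNat := by omega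
            rw [h1]
      rw [hbij]
      set T : ℕ → ℝ := fun k =>
        if k < α ∧ k ≤ mn then Rc ^ k / (Nat.factorial k) * (SS α N (mn - k) * Rc ^ (mn - k))
        else 0 with hT
      have h1 : ∑ k ∈ Finset.range (mn + 1),
          (if k < α then Rc ^ k / (Nat.factorial k) else 0) *
            (SS α N (mn - k) * Rc ^ (mn - k)) = ∑ k ∈ Finset.range (mn + 1), T k := by
        apply Finset.sum_congr rfl
        intro k hk
        rw [Finset.mem_range] at hk
        rw [hT]
        dsimp only
        by_cases h : k < α
        · rw [if_pos h, if_pos ⟨h, by omega⟩]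
        · rw [if_neg h, if_neg (by tauto), zero_mul]
      have h2 : SS α (N + 1) mn * Rc ^ mn = ∑ k ∈ Finset.range α, T k := by
        rw [SS_succ, Finset.sum_mul]
        apply Finset.sum_congr rfl
        intro k hk
        rw [Finset.mem_range] at hk
        rw [hT]
        dsimp only
        by_cases h : k ≤ mn
        · rw [if_pos h, if_pos ⟨hk, h⟩]
          have hpw : Rc ^ mn = Rc ^ k * Rc ^ (mn - k) := by
            rw [← pow_add]; congr 1; omega
          rw [hpw]; ring
        · rw [if_neg h, if_neg (by tauto), zero_mul]
      have hzero : ∀ k, T k ≠ 0 → k ∈ Finset.range (mn + 1) ∩ Finset.range α := by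
        intro k hknz
        rw [hT] at hknz
        dsimp only at hknz
        rw [Finset.mem_inter, Finset.mem_range, Finset.mem_range]
        by_contra hc
        exact hknz (if_neg (by omega))
      have ee1 : ∑ k ∈ Finset.range (mn + 1) ∩ Finset.range α, T k
          = ∑ k ∈ Finset.range (mn + 1), T k :=
        Finset.sum_subset Finset.inter_subset_left
          (fun k hk hnk => by by_contra hc; exact hnk (hzero k hc))
      have ee2 : ∑ k ∈ Finset.range (mn + 1) ∩ Finset.range α, T k
          = ∑ k ∈ Finset.range α, T k :=
        Finset.sum_subset Finset.inter_subset_right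
          (fun k hk hnk => by by_contra hc; exact hnk (hzero k hc))
      rw [h1, h2, ← ee1, ee2]



theorem sum_f_le {α N : ℕ} (f : Fin N → ℕ)
    (hf : f ∈ Fintype.piFinset fun _ : Fin N => Finset.range α) :
    (∑ i, f i) ≤ N * (α - 1) := by
  rw [Fintype.mem_piFinset] at hf
  calc (∑ i, f i) ≤ ∑ _i : Fin N, (α - 1) := by
        apply Finset.sum_le_sum
        intro i _
        have := hf i
        rw [Finset.mem_range] at this
        omega
    _ = N * (α - 1) := by
        rw [Finset.sum_const, Finset.card_univ, Fintype.card_fin, smul_eq_mul]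

theorem sum_gamma {α : ℕ} {Rc : ℝ} (hα : 1 ≤ α) (hRc : 0 < Rc)
    (heq : (Rc - 1) * truncExp α Rc = Rc ^ α / (Nat.factorial (α - 1))) :
    ∑ γ ∈ Finset.range α, (γ : ℝ) * (Rc ^ γ / (Nat.factorial γ)) = truncExp α Rc := by
  obtain ⟨p, rfl⟩ : ∃ p, α = p + 1 := ⟨α - 1, by omega⟩
  have hfact : ∀ i : ℕ, ((i : ℝ) + 1) * (Rc ^ (i + 1) / (Nat.factorial (i + 1)))
      = Rc * (Rc ^ i / (Nat.factorial i)) := by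
    intro i
    rw [Nat.factorial_succ]
    have h1 : (Nat.factorial i : ℝ) ≠ 0 := by positivity
    push_cast
    field_simp
    ring
  rw [Finset.sum_range_succ']
  have hsimp : ∀ i ∈ Finset.range p,
      ((i + 1 : ℕ) : ℝ) * (Rc ^ (i + 1) / (Nat.factorial (i + 1)))
        = Rc * (Rc ^ i / (Nat.factorial i)) := by
    intro i _
    push_cast
    exact hfact i
  rw [Finset.sum_congr rfl hsimp]
  rw [← Finset.mul_sum]
  have hg : truncExp (p + 1) Rc = (∑ i ∈ Finset.range p, Rc ^ i / (Nat.factorial i))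
      + Rc ^ p / (Nat.factorial p) := by
    rw [truncExp, Finset.sum_range_succ]
  have heq' : (Rc - 1) * truncExp (p + 1) Rc = Rc ^ (p + 1) / (Nat.factorial p) := by
    have : p + 1 - 1 = p := by omega
    rw [← this]
    exact heq
  have hpow : Rc * (Rc ^ p / (Nat.factorial p)) = Rc ^ (p + 1) / (Nat.factorial p) := by
    rw [pow_succ]; ring
  norm_num
  nlinarith [hg, heq', hpow]

theorem total_sum {α N B : ℕ} {Rc : ℝ} (hB : N * (α - 1) < B) :
    ∑ m ∈ Finset.range B, SS α N m * Rc ^ m = (truncExp α Rc) ^ N := by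
  have h1 : (truncExp α Rc) ^ N = ∏ _i : Fin N, (∑ γ ∈ Finset.range α, Rc ^ γ / (Nat.factorial γ)) := by
    rw [Finset.prod_const, Finset.card_univ, Fintype.card_fin, truncExp]
  rw [h1, Finset.prod_univ_sum]
  have h2 : ∀ f : Fin N → ℕ, (∏ i, Rc ^ (f i) / (Nat.factorial (f i)))
      = Rc ^ (∑ i, f i) * ∏ i, (1 : ℝ) / (Nat.factorial (f i)) := by
    intro f
    rw [← Finset.prod_pow_eq_pow_sum, ← Finset.prod_mul_distrib]
    apply Finset.prod_congr rfl
    intro i _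
    rw [mul_one_div]
  rw [Finset.sum_congr rfl fun f _ => h2 f]
  rw [← Finset.sum_fiberwise_of_maps_to (g := fun f => ∑ i, f i)
      (fun f hf => Finset.mem_range.mpr (lt_of_le_of_lt (sum_f_le f hf) hB))]
  apply Finset.sum_congr rfl
  intro m _
  have hco : ∀ f ∈ (Fintype.piFinset fun _ : Fin N => Finset.range α).filter
      (fun f => ∑ i, f i = m),
      (Rc ^ (∑ i, f i) * ∏ i, (1 : ℝ) / (Nat.factorial (f i)))
        = Rc ^ m * ∏ i, (1 : ℝ) / (Nat.factorial (f i)) := by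
    intro f hf
    rw [(Finset.mem_filter.mp hf).2]
  rw [Finset.sum_congr rfl hco, ← Finset.mul_sum, SS]
  ring

set_option maxHeartbeats 1000000 in
theorem mean_sum {α N B : ℕ} {Rc : ℝ} (hα : 1 ≤ α) (hRc : 0 < Rc)
    (heq : (Rc - 1) * truncExp α Rc = Rc ^ α / (Nat.factorial (α - 1)))
    (hB : N * (α - 1) < B) :
    ∑ m ∈ Finset.range B, (m : ℝ) * (SS α N m * Rc ^ m) = N * (truncExp α Rc) ^ N := by
  -- step 1: write as a sum over piFinset
  have h1 : ∑ m ∈ Finset.range B, (m : ℝ) * (SS α N m * Rc ^ m)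
      = ∑ f ∈ Fintype.piFinset (fun _ : Fin N => Finset.range α),
          ((∑ i, f i : ℕ) : ℝ) * (Rc ^ (∑ i, f i) * ∏ i, (1 : ℝ) / (Nat.factorial (f i))) := by
    rw [← Finset.sum_fiberwise_of_maps_to (g := fun f => ∑ i, f i)
        (fun f hf => Finset.mem_range.mpr (lt_of_le_of_lt (sum_f_le f hf) hB))]
    apply Finset.sum_congr rfl
    intro m _
    have hco : ∀ f ∈ (Fintype.piFinset fun _ : Fin N => Finset.range α).filter
        (fun f => ∑ i, f i = m),
        ((∑ i, f i : ℕ) : ℝ) * (Rc ^ (∑ i, f i) * ∏ i, (1 : ℝ) / (Nat.factorial (f i)))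
          = ((m : ℝ) * Rc ^ m) * ∏ i, (1 : ℝ) / (Nat.factorial (f i)) := by
      intro f hf
      rw [(Finset.mem_filter.mp hf).2]
      ring
    rw [Finset.sum_congr rfl hco, ← Finset.mul_sum, SS]
    ring
  rw [h1]
  -- step 2: expand the cast of sum and swap
  have h2 : ∀ f : Fin N → ℕ,
      ((∑ i, f i : ℕ) : ℝ) * (Rc ^ (∑ i, f i) * ∏ i, (1 : ℝ) / (Nat.factorial (f i)))
      = ∑ i0 : Fin N, (f i0 : ℝ) * ∏ i, Rc ^ (f i) / (Nat.factorial (f i)) := by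
    intro f
    rw [Nat.cast_sum, Finset.sum_mul]
    apply Finset.sum_congr rfl
    intro i0 _
    congr 1
    rw [← Finset.prod_pow_eq_pow_sum, ← Finset.prod_mul_distrib]
    apply Finset.prod_congr rfl
    intro i _
    rw [mul_one_div]
  rw [Finset.sum_congr rfl fun f _ => h2 f]
  rw [Finset.sum_comm]
  -- step 3: for each fixed i0, evaluate the sum
  have h3 : ∀ i0 : Fin N,
      ∑ f ∈ Fintype.piFinset (fun _ : Fin N => Finset.range α),
        (f i0 : ℝ) * ∏ i, Rc ^ (f i) / (Nat.factorial (f i))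
      = (truncExp α Rc) ^ N := by
    intro i0
    have h4 : ∀ f : Fin N → ℕ,
        (f i0 : ℝ) * ∏ i, Rc ^ (f i) / (Nat.factorial (f i))
        = ∏ i, (if i = i0 then ((f i : ℝ)) * (Rc ^ (f i) / (Nat.factorial (f i)))
            else Rc ^ (f i) / (Nat.factorial (f i))) := by
      intro f
      rw [← Finset.mul_prod_erase Finset.univ
          (fun i => if i = i0 then ((f i : ℝ)) * (Rc ^ (f i) / (Nat.factorial (f i)))
            else Rc ^ (f i) / (Nat.factorial (f i))) (Finset.mem_univ i0),
        ← Finset.mul_prod_erase Finset.univ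
          (fun i => Rc ^ (f i) / ((Nat.factorial (f i) : ℝ))) (Finset.mem_univ i0)]
      rw [if_pos rfl, ← mul_assoc]
      congr 1
      apply Finset.prod_congr rfl
      intro i hi
      rw [Finset.mem_erase] at hi
      rw [if_neg hi.1]
    rw [Finset.sum_congr rfl fun f _ => h4 f]
    have h5 : ∀ i : Fin N,
        (∑ γ ∈ Finset.range α, if i = i0 then ((γ : ℝ)) * (Rc ^ γ / (Nat.factorial γ))
          else Rc ^ γ / (Nat.factorial γ)) = truncExp α Rc := by
      intro i
      by_cases h : i = i0
      · simp only [if_pos h]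
        exact sum_gamma hα hRc heq
      · simp only [if_neg h]
        rfl
    calc ∑ f ∈ Fintype.piFinset (fun _ : Fin N => Finset.range α),
          ∏ i, (if i = i0 then ((f i : ℝ)) * (Rc ^ (f i) / (Nat.factorial (f i)))
            else Rc ^ (f i) / (Nat.factorial (f i)))
        = ∏ i : Fin N, ∑ γ ∈ Finset.range α,
            (if i = i0 then ((γ : ℝ)) * (Rc ^ γ / (Nat.factorial γ))
              else Rc ^ γ / (Nat.factorial γ)) :=
          (Finset.prod_univ_sum (fun _ : Fin N => Finset.range α)
            (fun i γ => if i = i0 then ((γ : ℝ)) * (Rc ^ γ / (Nat.factorial γ))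
              else Rc ^ γ / (Nat.factorial γ))).symm
      _ = ∏ _i : Fin N, truncExp α Rc := Finset.prod_congr rfl fun i _ => h5 i
      _ = (truncExp α Rc) ^ N := by
          rw [Finset.prod_const, Finset.card_univ, Fintype.card_fin]
  rw [Finset.sum_congr rfl fun i0 _ => h3 i0]
  rw [Finset.sum_const, Finset.card_univ, Fintype.card_fin, nsmul_eq_mul]

theorem truncExp_pos {α : ℕ} {Rc : ℝ} (hα : 0 < α) (hRc : 0 < Rc) : 0 < truncExp α Rc :=
  Finset.sum_pos (fun γ _ => by positivity) ⟨0, Finset.mem_range.mpr hα⟩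

theorem SS_lower {α : ℕ} {Rc : ℝ} (hα : 3 ≤ α) (hRc : 0 < Rc)
    (heq : (Rc - 1) * truncExp α Rc = Rc ^ α / (Nat.factorial (α - 1)))
    (N : ℕ) (hN : 1 ≤ N) :
    (truncExp α Rc) ^ N / (((N : ℝ) + 1) ^ 2 * ((N * (α - 2) + 1 : ℕ) : ℝ) ^ 2)
      ≤ SS α N N * Rc ^ N := by
  set g := truncExp α Rc with hgdef
  have hg : 0 < g := truncExp_pos (by omega) hRc
  have hG : 0 < g ^ N := pow_pos hg N
  set M := N * (α - 1) with hMdef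
  set K := N * (α - 2) + 1 with hKdef
  have hM' : M = N * (α - 2) + N := by
    rw [hMdef]
    have h1 : α - 1 = (α - 2) + 1 := by omega
    rw [h1, Nat.mul_add, Nat.mul_one]
  have hNM : N ≤ M := by omega
  have hMK : M + 1 = N + K := by omega
  set T : ℕ → ℝ := fun m => SS α N m * Rc ^ m with hTdef
  have hTnn : ∀ m, 0 ≤ T m := fun m => mul_nonneg (SS_nonneg α N m) (by positivity)
  have htot : ∑ m ∈ Finset.range (M + 1), T m = g ^ N := total_sum (by omega)
  have hmean : ∑ m ∈ Finset.range (M + 1), (m : ℝ) * T m = N * g ^ N :=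
    mean_sum (by omega) hRc heq (by omega)
  have hNpos : (0 : ℝ) < (N : ℝ) + 1 := by positivity
  have hKpos : (0 : ℝ) < ((K : ℕ) : ℝ) := by positivity
  -- pigeonhole A: some a ≤ N has large T a
  have hA : ∃ a ∈ Finset.range (N + 1), g ^ N / ((N : ℝ) + 1) ^ 2 ≤ T a := by
    have hsplit : ∑ m ∈ Finset.range (N + 1), T m
        + ∑ m ∈ Finset.Ico (N + 1) (M + 1), T m = g ^ N := by
      rw [← htot, Finset.range_eq_Ico, Finset.range_eq_Ico]
      exact Finset.sum_Ico_consecutive T (by omega) (by omega)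
    have htail : ∑ m ∈ Finset.Ico (N + 1) (M + 1), T m ≤ (N : ℝ) * g ^ N / ((N : ℝ) + 1) := by
      have hstep : ∀ m ∈ Finset.Ico (N + 1) (M + 1), T m ≤ ((m : ℝ) * T m) / ((N : ℝ) + 1) := by
        intro m hm
        rw [Finset.mem_Ico] at hm
        rw [le_div_iff₀ hNpos]
        have h1 : (N : ℝ) + 1 ≤ (m : ℝ) := by
          have h2 : (N + 1 : ℕ) ≤ m := hm.1
          exact_mod_cast h2
        nlinarith [hTnn m]
      calc ∑ m ∈ Finset.Ico (N + 1) (M + 1), T m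
          ≤ ∑ m ∈ Finset.Ico (N + 1) (M + 1), ((m : ℝ) * T m) / ((N : ℝ) + 1) :=
            Finset.sum_le_sum hstep
        _ = (∑ m ∈ Finset.Ico (N + 1) (M + 1), (m : ℝ) * T m) / ((N : ℝ) + 1) := by
            rw [Finset.sum_div]
        _ ≤ (∑ m ∈ Finset.range (M + 1), (m : ℝ) * T m) / ((N : ℝ) + 1) := by
            apply (div_le_div_iff_of_pos_right hNpos).mpr
            apply Finset.sum_le_sum_of_subset_of_nonneg
            · rw [Finset.range_eq_Ico]
              exact Finset.Ico_subset_Ico (by omega) (by omega)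
            · intro m _ _
              exact mul_nonneg (by positivity) (hTnn m)
        _ = (N : ℝ) * g ^ N / ((N : ℝ) + 1) := by rw [hmean]
    have hhead : g ^ N / ((N : ℝ) + 1) ≤ ∑ m ∈ Finset.range (N + 1), T m := by
      have hid : g ^ N / ((N : ℝ) + 1) + (N : ℝ) * g ^ N / ((N : ℝ) + 1) = g ^ N := by
        field_simp
        ring
      linarith
    by_contra hc
    push_neg at hc
    have hlt : ∑ m ∈ Finset.range (N + 1), T m
        < ∑ _m ∈ Finset.range (N + 1), g ^ N / ((N : ℝ) + 1) ^ 2 :=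
      Finset.sum_lt_sum_of_nonempty ⟨0, Finset.mem_range.mpr (by omega)⟩ hc
    rw [Finset.sum_const, Finset.card_range, nsmul_eq_mul] at hlt
    have hid2 : ((N + 1 : ℕ) : ℝ) * (g ^ N / ((N : ℝ) + 1) ^ 2) = g ^ N / ((N : ℝ) + 1) := by
      push_cast
      field_simp
    rw [hid2] at hlt
    linarith
  -- pigeonhole B: some b in [N, M] has large T b
  have hB : ∃ b ∈ Finset.Icc N M, g ^ N / ((K : ℕ) : ℝ) ^ 2 ≤ T b := by
    have hsplit : ∑ m ∈ Finset.range N, T m + ∑ m ∈ Finset.Icc N M, T m = g ^ N := by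
      rw [← htot, ← Finset.Ico_add_one_right_eq_Icc, Finset.range_eq_Ico, Finset.range_eq_Ico]
      exact Finset.sum_Ico_consecutive T (by omega) (by omega)
    have hsplit2 : ∑ m ∈ Finset.range N, (m : ℝ) * T m
        + ∑ m ∈ Finset.Icc N M, (m : ℝ) * T m = N * g ^ N := by
      rw [← hmean, ← Finset.Ico_add_one_right_eq_Icc, Finset.range_eq_Ico, Finset.range_eq_Ico]
      exact Finset.sum_Ico_consecutive _ (by omega) (by omega)
    have hb1 : ∑ m ∈ Finset.range N, (m : ℝ) * T m
        ≤ ((N : ℝ) - 1) * ∑ m ∈ Finset.range N, T m := by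
      rw [Finset.mul_sum]
      apply Finset.sum_le_sum
      intro m hm
      rw [Finset.mem_range] at hm
      apply mul_le_mul_of_nonneg_right ?_ (hTnn m)
      have : (m : ℝ) ≤ (N : ℝ) - 1 := by
        have : m + 1 ≤ N := hm
        have := (Nat.cast_le (α := ℝ)).mpr this
        push_cast at this
        linarith
      exact this
    have hb2 : ∑ m ∈ Finset.Icc N M, (m : ℝ) * T m ≤ (M : ℝ) * ∑ m ∈ Finset.Icc N M, T m := by
      rw [Finset.mul_sum]
      apply Finset.sum_le_sum
      intro m hm
      rw [Finset.mem_Icc] at hm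
      apply mul_le_mul_of_nonneg_right ?_ (hTnn m)
      exact_mod_cast hm.2
    have hU : g ^ N / ((K : ℕ) : ℝ) ≤ ∑ m ∈ Finset.Icc N M, T m := by
      have hKM : (M : ℝ) - ((N : ℝ) - 1) = ((K : ℕ) : ℝ) := by
        have : (M : ℝ) + 1 = (N : ℝ) + ((K : ℕ) : ℝ) := by exact_mod_cast congrArg (Nat.cast : ℕ → ℝ) hMK
        linarith
      have hheadnn : 0 ≤ ∑ m ∈ Finset.range N, T m :=
        Finset.sum_nonneg fun m _ => hTnn m
      rw [div_le_iff₀ hKpos]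
      nlinarith [hsplit, hsplit2, hb1, hb2]
    by_contra hc
    push_neg at hc
    have hlt : ∑ m ∈ Finset.Icc N M, T m
        < ∑ _m ∈ Finset.Icc N M, g ^ N / ((K : ℕ) : ℝ) ^ 2 :=
      Finset.sum_lt_sum_of_nonempty ⟨N, Finset.mem_Icc.mpr ⟨le_refl N, hNM⟩⟩ hc
    rw [Finset.sum_const, Nat.card_Icc, nsmul_eq_mul] at hlt
    have hcard : M + 1 - N = K := by omega
    rw [hcard] at hlt
    have hid2 : ((K : ℕ) : ℝ) * (g ^ N / ((K : ℕ) : ℝ) ^ 2) = g ^ N / ((K : ℕ) : ℝ) := by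
      field_simp
    rw [hid2] at hlt
    linarith
  obtain ⟨a, ha, haT⟩ := hA
  obtain ⟨b, hb, hbT⟩ := hB
  rw [Finset.mem_range] at ha
  rw [Finset.mem_Icc] at hb
  have haN : a ≤ N := by omega
  -- log-concavity step
  have hPP := PP_Wz (α := α) (Rc := Rc) hRc.le N
  have hRR := RR_of_PP hPP (N - a) (b - N) (a : ℤ)
  have ea1 : (a : ℤ) + ((N - a : ℕ) : ℤ) + ((b - N : ℕ) : ℤ) = (b : ℤ) := by omega
  have ea2 : (a : ℤ) + ((N - a : ℕ) : ℤ) = (N : ℤ) := by omega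
  have ea3 : (a : ℤ) + ((b - N : ℕ) : ℤ) = ((a + b - N : ℕ) : ℤ) := by omega
  rw [ea1, ea2, ea3] at hRR
  have hWnat : ∀ x : ℕ, Wz α Rc N (x : ℤ) = T x := by
    intro x
    rw [Wz_eq, if_pos (by positivity)]
    simp
    rfl
  rw [hWnat, hWnat, hWnat, hWnat] at hRR
  have hq : T (a + b - N) ≤ g ^ N := by
    rw [← htot]
    apply Finset.single_le_sum (fun m _ => hTnn m)
    rw [Finset.mem_range]
    omega
  have hTN : 0 ≤ T N := hTnn N
  have hchain : g ^ N / ((N : ℝ) + 1) ^ 2 * (g ^ N / ((K : ℕ) : ℝ) ^ 2) ≤ T N * g ^ N := by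
    calc g ^ N / ((N : ℝ) + 1) ^ 2 * (g ^ N / ((K : ℕ) : ℝ) ^ 2)
        ≤ T a * T b := by
          apply mul_le_mul haT hbT (by positivity) (hTnn a)
      _ ≤ T N * T (a + b - N) := hRR
      _ ≤ T N * g ^ N := mul_le_mul_of_nonneg_left hq hTN
  have hD : (0 : ℝ) < ((N : ℝ) + 1) ^ 2 * ((K : ℕ) : ℝ) ^ 2 := by positivity
  have hid : g ^ N / ((N : ℝ) + 1) ^ 2 * (g ^ N / ((K : ℕ) : ℝ) ^ 2)
      * (((N : ℝ) + 1) ^ 2 * ((K : ℕ) : ℝ) ^ 2) = g ^ N * g ^ N := by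
    field_simp
  have h1 := mul_le_mul_of_nonneg_right hchain (le_of_lt hD)
  rw [hid] at h1
  have h2 : T N * g ^ N * (((N : ℝ) + 1) ^ 2 * ((K : ℕ) : ℝ) ^ 2)
      = (T N * (((N : ℝ) + 1) ^ 2 * ((K : ℕ) : ℝ) ^ 2)) * g ^ N := by ring
  rw [h2] at h1
  have h3 : g ^ N ≤ T N * (((N : ℝ) + 1) ^ 2 * ((K : ℕ) : ℝ) ^ 2) :=
    le_of_mul_le_mul_right h1 hG
  rw [div_le_iff₀ hD]
  exact h3

theorem rootedTrees_eq (α k : ℕ) :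
    rootedTrees α (k + 2) = (1 / ((k : ℝ) + 1)) * SS α (k + 1) k := by
  show (1 / (((k + 2 : ℕ) : ℝ) - 1)) * SS α (k + 1) k = _
  congr 2
  push_cast
  ring

end BP

/-- **The critical fugacity is the radius of convergence.**
Let `α ≥ 3`, `R_c` the unique positive solution of
`(R − 1)·g_α(R) = R^α/(α−1)!`, and `β_c = R_c/g_α(R_c)`.  Then the power
series `Σ_{n≥2} r_α(n)·x^{n−1}` converges for `|x| < β_c` and diverges for
`|x| > β_c`: its radius of convergence is exactly `β_c`. -/
theorem branched_polymer_radius_of_convergence (α : ℕ) (hα : 3 ≤ α)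
    (Rc : ℝ) (hRc : 0 < Rc)
    (heq : (Rc - 1) * truncExp α Rc = Rc ^ α / (Nat.factorial (α - 1)))
    (huniq : ∀ R : ℝ, 0 < R →
        (R - 1) * truncExp α R = R ^ α / (Nat.factorial (α - 1)) → R = Rc) :
    (∀ x : ℝ, |x| < Rc / truncExp α Rc →
        Summable (fun k : ℕ => rootedTrees α (k + 2) * x ^ (k + 1))) ∧
    (∀ x : ℝ, Rc / truncExp α Rc < |x| →
        ¬ Summable (fun k : ℕ => rootedTrees α (k + 2) * x ^ (k + 1))) := by
  have hg : 0 < truncExp α Rc := BP.truncExp_pos (by omega) hRc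
  set g := truncExp α Rc with hgdef
  have hSSle : ∀ k : ℕ, BP.SS α (k + 1) k * Rc ^ k ≤ g ^ (k + 1) := by
    intro k
    have hkM : k < (k + 1) * (α - 1) + 1 := by
      have h1 : (k + 1) * 1 ≤ (k + 1) * (α - 1) :=
        Nat.mul_le_mul_left (k + 1) (by omega)
      omega
    have htot := BP.total_sum (α := α) (N := k + 1) (B := (k + 1) * (α - 1) + 1)
      (Rc := Rc) (by omega)
    calc BP.SS α (k + 1) k * Rc ^ k
        ≤ ∑ m ∈ Finset.range ((k + 1) * (α - 1) + 1), BP.SS α (k + 1) m * Rc ^ m := by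
          apply Finset.single_le_sum
            (fun m _ => mul_nonneg (BP.SS_nonneg α (k + 1) m) (by positivity))
          exact Finset.mem_range.mpr hkM
      _ = g ^ (k + 1) := htot
  have habs_eq : ∀ x : ℝ, ∀ k : ℕ, |rootedTrees α (k + 2) * x ^ (k + 1)|
      = (1 / ((k : ℝ) + 1)) * BP.SS α (k + 1) k * |x| ^ (k + 1) := by
    intro x k
    rw [abs_mul, abs_pow, BP.rootedTrees_eq]
    rw [abs_of_nonneg (mul_nonneg (by positivity) (BP.SS_nonneg α (k + 1) k)), mul_assoc]
  constructor
  · -- convergence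
    intro x hx
    set q := g * |x| / Rc with hqdef
    have hq0 : 0 ≤ q := by positivity
    have hq1 : q < 1 := by
      rw [hqdef, div_lt_one hRc]
      calc g * |x| < g * (Rc / g) := by exact mul_lt_mul_of_pos_left hx hg
        _ = Rc := by field_simp
    apply summable_abs_iff.mp
    apply Summable.of_nonneg_of_le (fun k => abs_nonneg _) (fun k => ?_)
      ((summable_geometric_of_lt_one hq0 hq1).mul_left (g * |x|))
    rw [habs_eq]
    have h1 : (1 / ((k : ℝ) + 1)) * BP.SS α (k + 1) k ≤ BP.SS α (k + 1) k := by
      have h2 : (1 : ℝ) / ((k : ℝ) + 1) ≤ 1 := by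
        rw [div_le_one (by positivity)]
        linarith [Nat.cast_nonneg (α := ℝ) k]
      nlinarith [BP.SS_nonneg α (k + 1) k]
    have h3 : BP.SS α (k + 1) k ≤ g ^ (k + 1) / Rc ^ k :=
      (le_div_iff₀ (by positivity)).mpr (hSSle k)
    have h4 : g * |x| * q ^ k = (g ^ (k + 1) / Rc ^ k) * |x| ^ (k + 1) := by
      rw [hqdef, div_pow, mul_pow]
      rw [pow_succ, pow_succ]
      field_simp
    rw [h4]
    have h5 : (0 : ℝ) ≤ |x| ^ (k + 1) := by positivity
    calc (1 / ((k : ℝ) + 1)) * BP.SS α (k + 1) k * |x| ^ (k + 1)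
        ≤ BP.SS α (k + 1) k * |x| ^ (k + 1) := mul_le_mul_of_nonneg_right h1 h5
      _ ≤ (g ^ (k + 1) / Rc ^ k) * |x| ^ (k + 1) := mul_le_mul_of_nonneg_right h3 h5
  · -- divergence
    intro x hx hsum
    have hxpos : 0 < |x| := lt_trans (div_pos hRc hg) hx
    set q := g * |x| / Rc with hqdef
    have hq : 1 < q := by
      rw [hqdef, lt_div_iff₀ hRc]
      have := (div_lt_iff₀ hg).mp hx
      linarith
    have hqpos : 0 < q := lt_trans one_pos hq
    set E : ℕ → ℝ := fun k => ((k : ℝ) + 1) ^ 3 * ((k * (α - 2) + 1 : ℕ) : ℝ) ^ 2 with hEdef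
    have hEpos : ∀ k, 0 < E k := fun k => by positivity
    -- lower bound on the terms
    have hlow : ∀ k : ℕ, 1 ≤ k → |x| * q ^ k / E k ≤ |rootedTrees α (k + 2) * x ^ (k + 1)| := by
      intro k hk
      rw [habs_eq]
      have hSlow := BP.SS_lower hα hRc heq k hk
      have hmono := BP.SS_succ_ge (α := α) (by omega) k k
      have hRk : (0 : ℝ) < Rc ^ k := by positivity
      have hS2 : g ^ k / (((k : ℝ) + 1) ^ 2 * ((k * (α - 2) + 1 : ℕ) : ℝ) ^ 2 * Rc ^ k)
          ≤ BP.SS α (k + 1) k := by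
        have h6 : g ^ k / (((k : ℝ) + 1) ^ 2 * ((k * (α - 2) + 1 : ℕ) : ℝ) ^ 2 * Rc ^ k)
            ≤ BP.SS α k k := by
          rw [div_le_iff₀ (by positivity)]
          rw [div_le_iff₀ (by positivity)] at hSlow
          nlinarith [hSlow]
        exact le_trans h6 hmono
      have h7 : |x| * q ^ k / E k
          = (1 / ((k : ℝ) + 1)) *
            (g ^ k / (((k : ℝ) + 1) ^ 2 * ((k * (α - 2) + 1 : ℕ) : ℝ) ^ 2 * Rc ^ k))
            * |x| ^ (k + 1) := by
        rw [hqdef, hEdef, div_pow, mul_pow, pow_succ]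
        have hc1 : ((k * (α - 2) + 1 : ℕ) : ℝ) ≠ 0 := by positivity
        have hc2 : ((k : ℝ) + 1) ≠ 0 := by positivity
        field_simp
        ring
      rw [h7]
      apply mul_le_mul_of_nonneg_right ?_ (by positivity)
      apply mul_le_mul_of_nonneg_left hS2 (by positivity)
    -- limits
    have htend : Filter.Tendsto (fun k => |rootedTrees α (k + 2) * x ^ (k + 1)|)
        Filter.atTop (nhds 0) := (summable_abs_iff.mpr hsum).tendsto_atTop_zero
    have hLtend : Filter.Tendsto (fun k => |x| * q ^ k / E k) Filter.atTop (nhds 0) := by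
      apply squeeze_zero' (Filter.Eventually.of_forall (fun k => by positivity))
        ?_ htend
      rw [Filter.eventually_atTop]
      exact ⟨1, hlow⟩
    have hr0 : (0 : ℝ) ≤ 1 / q := by positivity
    have hr1 : 1 / q < 1 := by rw [div_lt_one hqpos]; exact hq
    have htail5 : Filter.Tendsto (fun n : ℕ => ((n : ℝ) + 1) ^ 5 * (1 / q) ^ n)
        Filter.atTop (nhds 0) := by
      have hbase := tendsto_pow_const_mul_const_pow_of_lt_one 5 hr0 hr1
      have hshift := hbase.comp (Filter.tendsto_add_atTop_nat 1)
      have hmul := hshift.const_mul q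
      rw [mul_zero] at hmul
      apply hmul.congr
      intro n
      show q * (((n + 1 : ℕ) : ℝ) ^ 5 * (1 / q) ^ (n + 1)) = ((n : ℝ) + 1) ^ 5 * (1 / q) ^ n
      rw [pow_succ]
      push_cast
      field_simp
      ring_nf
      rw [mul_inv_cancel₀ (ne_of_gt hqpos), one_mul]
    have hEbound : ∀ k : ℕ, E k ≤ (α : ℝ) ^ 2 * ((k : ℝ) + 1) ^ 5 := by
      intro k
      have h8 : (k * (α - 2) + 1 : ℕ) ≤ α * (k + 1) := by
        have h9 : k * (α - 2) ≤ k * α := Nat.mul_le_mul_left k (by omega)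
        have h10 : α * (k + 1) = k * α + α := by ring
        omega
      have h11 : ((k * (α - 2) + 1 : ℕ) : ℝ) ≤ (α : ℝ) * ((k : ℝ) + 1) := by
        have h := (Nat.cast_le (α := ℝ)).mpr h8
        push_cast at h ⊢
        linarith
      have h12 : (0 : ℝ) ≤ ((k * (α - 2) + 1 : ℕ) : ℝ) := by positivity
      have h13 : (0 : ℝ) ≤ ((k : ℝ) + 1) := by positivity
      rw [hEdef]
      dsimp only
      have h14 : ((k * (α - 2) + 1 : ℕ) : ℝ) * ((k * (α - 2) + 1 : ℕ) : ℝ)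
          ≤ ((α : ℝ) * ((k : ℝ) + 1)) * ((α : ℝ) * ((k : ℝ) + 1)) :=
        mul_le_mul h11 h11 h12 (by positivity)
      nlinarith [pow_nonneg h13 3, h14]
    have hinv : Filter.Tendsto (fun k => E k * (1 / q) ^ k / |x|) Filter.atTop (nhds 0) := by
      have hmaj := htail5.const_mul ((α : ℝ) ^ 2 / |x|)
      rw [mul_zero] at hmaj
      apply squeeze_zero' (Filter.Eventually.of_forall (fun k => by positivity))
        (Filter.Eventually.of_forall (fun k => ?_)) hmaj
      show E k * (1 / q) ^ k / |x| ≤ (α : ℝ) ^ 2 / |x| * (((k : ℝ) + 1) ^ 5 * (1 / q) ^ k)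
      rw [div_mul_eq_mul_div]
      apply (div_le_div_iff_of_pos_right hxpos).mpr
      have h14 : (0 : ℝ) ≤ (1 / q) ^ k := by positivity
      calc E k * (1 / q) ^ k ≤ ((α : ℝ) ^ 2 * ((k : ℝ) + 1) ^ 5) * (1 / q) ^ k :=
            mul_le_mul_of_nonneg_right (hEbound k) h14
        _ = (α : ℝ) ^ 2 * (((k : ℝ) + 1) ^ 5 * (1 / q) ^ k) := by ring
    have hone : Filter.Tendsto (fun k => (|x| * q ^ k / E k) * (E k * (1 / q) ^ k / |x|))
        Filter.atTop (nhds 0) := by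
      have := hLtend.mul hinv
      rwa [mul_zero] at this
    have heq1 : ∀ k : ℕ, (|x| * q ^ k / E k) * (E k * (1 / q) ^ k / |x|) = 1 := by
      intro k
      have h15 : q ^ k * (1 / q) ^ k = 1 := by
        rw [← mul_pow, mul_one_div_cancel (ne_of_gt hqpos), one_pow]
      have h16 : E k ≠ 0 := ne_of_gt (hEpos k)
      have h17 : |x| ≠ 0 := ne_of_gt hxpos
      field_simp
      nlinarith [h15]
    have hconst : Filter.Tendsto (fun _ : ℕ => (1 : ℝ)) Filter.atTop (nhds 0) :=
      hone.congr heq1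
    have : (0 : ℝ) = 1 := tendsto_nhds_unique hconst tendsto_const_nhds
    norm_num at this
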